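/- Let S be a numerical semigroup and f an automorphism of P(S). Then for every X ∈ P(S), the gap of f(X) equals the gap of X, where the gap g(X) of a finite set X is the largest d ≥ 1 such that there exist consecutive elements x < x' of X with x' − x = d (equivalently, the maximum difference between consecutive elements of X, and g(X) is undefined/0 for singletons). -/

import Mathlib

open Pointwise

/-- The power semigroup `P(S)`: finite nonempty subsets of `S`. -/
def PS (S : Set ℕ) : Set (Finset ℕ) := {X | X.Nonempty ∧ (X : Set ℕ) ⊆ S}

/-- `f` is an automorphism of the power semigroup `P(S)`:
an additive bijection of `P(S)` (setwise addition). -/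
def IsPowerAut (S : Set ℕ) (f : Finset ℕ → Finset ℕ) : Prop :=
  (∀ X ∈ PS S, f X ∈ PS S) ∧
  (∀ X ∈ PS S, ∀ Y ∈ PS S, f X = f Y → X = Y) ∧
  (∀ Y ∈ PS S, ∃ X ∈ PS S, f X = Y) ∧
  (∀ X ∈ PS S, ∀ Y ∈ PS S, f (X + Y) = f X + f Y)

/-- `S` is a numerical semigroup: a subsemigroup of `(ℕ, +)` with finite complement. -/
def IsNumSgp (S : Set ℕ) : Prop :=
  (∀ a ∈ S, ∀ b ∈ S, a + b ∈ S) ∧ (Sᶜ).Finite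

/-- `k` is the critical element of `S`: the least `k` with `[k, ∞) ⊆ S`. -/
def IsCritical (S : Set ℕ) (k : ℕ) : Prop :=
  (∀ n, k ≤ n → n ∈ S) ∧ ∀ j, (∀ n, j ≤ n → n ∈ S) → k ≤ j

/-- The gap of a finite set `X ⊆ ℕ`: the maximum of `x' - x` over pairs of
consecutive elements `x < x'` of `X` (and `0` for singletons). -/
def gap (X : Finset ℕ) : ℕ :=
  ((X ×ˢ X).filter
    (fun p => p.1 < p.2 ∧ ∀ y ∈ X, ¬(p.1 < y ∧ y < p.2))).sup (fun p => p.2 - p.1)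

open Finset

set_option linter.unusedSectionVars false
set_option linter.unusedTactic false
set_option linter.unusedVariables false

namespace S5

noncomputable def mn (X : Finset ℕ) : ℕ := if h : X.Nonempty then X.min' h else 0
noncomputable def mx (X : Finset ℕ) : ℕ := if h : X.Nonempty then X.max' h else 0

lemma mn_mem {X : Finset ℕ} (h : X.Nonempty) : mn X ∈ X := by
  rw [mn, dif_pos h]; exact X.min'_mem h

lemma mx_mem {X : Finset ℕ} (h : X.Nonempty) : mx X ∈ X := by
  rw [mx, dif_pos h]; exact X.max'_mem h

lemma mn_le {X : Finset ℕ} {x : ℕ} (hx : x ∈ X) : mn X ≤ x := by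
  rw [mn, dif_pos ⟨x, hx⟩]; exact X.min'_le x hx

lemma le_mx {X : Finset ℕ} {x : ℕ} (hx : x ∈ X) : x ≤ mx X := by
  rw [mx, dif_pos ⟨x, hx⟩]; exact X.le_max' x hx

lemma mn_le_mx {X : Finset ℕ} (h : X.Nonempty) : mn X ≤ mx X :=
  le_mx (mn_mem h)

lemma eq_singleton_of_mn_eq_mx {X : Finset ℕ} (h : X.Nonempty) (he : mn X = mx X) :
    X = {mn X} := by
  apply Finset.eq_singleton_iff_unique_mem.mpr
  refine ⟨mn_mem h, fun x hx => le_antisymm ?_ (mn_le hx)⟩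
  rw [he]; exact le_mx hx

lemma mn_add {X Y : Finset ℕ} (hX : X.Nonempty) (hY : Y.Nonempty) :
    mn (X + Y) = mn X + mn Y := by
  apply le_antisymm
  · exact mn_le (Finset.add_mem_add (mn_mem hX) (mn_mem hY))
  · have hm := mn_mem (hX.add hY)
    rw [Finset.mem_add] at hm
    obtain ⟨x, hx, y, hy, he⟩ := hm
    rw [← he]
    exact Nat.add_le_add (mn_le hx) (mn_le hy)

lemma mx_add {X Y : Finset ℕ} (hX : X.Nonempty) (hY : Y.Nonempty) :
    mx (X + Y) = mx X + mx Y := by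
  apply le_antisymm
  · have hm := mx_mem (hX.add hY)
    rw [Finset.mem_add] at hm
    obtain ⟨x, hx, y, hy, he⟩ := hm
    rw [← he]
    exact Nat.add_le_add (le_mx hx) (le_mx hy)
  · exact le_mx (Finset.add_mem_add (mx_mem hX) (mx_mem hY))

lemma mn_Icc {a b : ℕ} (h : a ≤ b) : mn (Icc a b) = a := by
  apply le_antisymm (mn_le (Finset.mem_Icc.mpr ⟨le_refl a, h⟩))
  exact (Finset.mem_Icc.mp (mn_mem (Finset.nonempty_Icc.mpr h))).1

lemma mx_Icc {a b : ℕ} (h : a ≤ b) : mx (Icc a b) = b := by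
  apply le_antisymm (Finset.mem_Icc.mp (mx_mem (Finset.nonempty_Icc.mpr h))).2
  exact le_mx (Finset.mem_Icc.mpr ⟨h, le_refl b⟩)

lemma mn_singleton (a : ℕ) : mn {a} = a := by
  have := mn_mem (Finset.singleton_nonempty a); simpa using this

lemma mx_singleton (a : ℕ) : mx {a} = a := by
  have := mx_mem (Finset.singleton_nonempty a); simpa using this

lemma pair_nonempty (a b : ℕ) : ({a, b} : Finset ℕ).Nonempty := ⟨a, by simp⟩

lemma mn_pair {a b : ℕ} (h : a ≤ b) : mn ({a, b} : Finset ℕ) = a := by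
  apply le_antisymm (mn_le (by simp))
  have := mn_mem (pair_nonempty a b)
  rw [Finset.mem_insert, Finset.mem_singleton] at this
  rcases this with h1 | h1 <;> omega

lemma mx_pair {a b : ℕ} (h : a ≤ b) : mx ({a, b} : Finset ℕ) = b := by
  apply le_antisymm
  · have := mx_mem (pair_nonempty a b)
    rw [Finset.mem_insert, Finset.mem_singleton] at this
    rcases this with h1 | h1 <;> omega
  · exact le_mx (by simp)

def Consec (X : Finset ℕ) (x x' : ℕ) : Prop :=
  x ∈ X ∧ x' ∈ X ∧ x < x' ∧ ∀ y ∈ X, ¬(x < y ∧ y < x')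

lemma consec_mem_filter {X : Finset ℕ} {x x' : ℕ} :
    (x, x') ∈ (X ×ˢ X).filter
      (fun p => p.1 < p.2 ∧ ∀ y ∈ X, ¬(p.1 < y ∧ y < p.2)) ↔ Consec X x x' := by
  rw [Finset.mem_filter, Finset.mem_product]
  exact ⟨fun ⟨⟨h1, h2⟩, h3, h4⟩ => ⟨h1, h2, h3, h4⟩, fun ⟨h1, h2, h3, h4⟩ => ⟨⟨h1, h2⟩, h3, h4⟩⟩

lemma gap_le_iff {X : Finset ℕ} {L : ℕ} :
    gap X ≤ L ↔ ∀ x x', Consec X x x' → x' - x ≤ L := by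
  rw [gap, Finset.sup_le_iff]
  constructor
  · intro h x x' hc
    exact h (x, x') (consec_mem_filter.mpr hc)
  · intro h p hp
    exact h p.1 p.2 (consec_mem_filter.mp hp)

lemma le_gap {X : Finset ℕ} {x x' : ℕ} (h : Consec X x x') : x' - x ≤ gap X :=
  Finset.le_sup (f := fun p : ℕ × ℕ => p.2 - p.1) (consec_mem_filter.mpr h)

lemma exists_consec {X : Finset ℕ} (h : X.Nonempty) (hlt : mn X < mx X) :
    ∃ x', Consec X (mn X) x' ∧ mn X < x' := by
  classical
  set B := X.filter (fun y => mn X < y) with hB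
  have hBne : B.Nonempty := ⟨mx X, by rw [hB, Finset.mem_filter]; exact ⟨mx_mem h, hlt⟩⟩
  have hmem := Finset.mem_filter.mp (B.min'_mem hBne)
  refine ⟨B.min' hBne, ⟨mn_mem h, hmem.1, hmem.2, ?_⟩, hmem.2⟩
  intro y hy hy2
  have : B.min' hBne ≤ y := B.min'_le y (Finset.mem_filter.mpr ⟨hy, hy2.1⟩)
  omega

lemma one_le_gap {X : Finset ℕ} (h : X.Nonempty) (hlt : mn X < mx X) : 1 ≤ gap X := by
  obtain ⟨x', hc, hx'⟩ := exists_consec h hlt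
  have := le_gap hc
  omega

lemma gap_le_width {X : Finset ℕ} : gap X ≤ mx X - mn X := by
  rw [gap_le_iff]
  intro x x' ⟨h1, h2, _, _⟩
  have := mn_le h1; have := le_mx h2; omega

lemma cover {X : Finset ℕ} (hX : X.Nonempty) {L : ℕ} (hg : gap X ≤ L) {n : ℕ}
    (h1 : mn X ≤ n) (h2 : n < mx X) : ∃ x ∈ X, x ≤ n ∧ n + 1 ≤ x + L := by
  classical
  set A := X.filter (fun y => y ≤ n) with hA
  have hAne : A.Nonempty := ⟨mn X, by rw [hA, Finset.mem_filter]; exact ⟨mn_mem hX, h1⟩⟩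
  set B := X.filter (fun y => n < y) with hB
  have hBne : B.Nonempty := ⟨mx X, by rw [hB, Finset.mem_filter]; exact ⟨mx_mem hX, h2⟩⟩
  set x := A.max' hAne with hx
  set x' := B.min' hBne with hx'
  have hxA := Finset.mem_filter.mp (A.max'_mem hAne)
  have hx'B := Finset.mem_filter.mp (B.min'_mem hBne)
  have hcons : Consec X x x' := by
    refine ⟨hxA.1, hx'B.1, by omega, ?_⟩
    intro y hy hy2
    by_cases hyn : y ≤ n
    · have : y ≤ x := A.le_max' y (Finset.mem_filter.mpr ⟨hy, hyn⟩); omega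
    · have : x' ≤ y := B.min'_le y (Finset.mem_filter.mpr ⟨hy, by omega⟩); omega
  have hd := gap_le_iff.mp hg _ _ hcons
  have h3 := hxA.2
  have h4 := hx'B.2
  exact ⟨x, hxA.1, h3, by omega⟩

lemma add_Icc_eq {X : Finset ℕ} (hX : X.Nonempty) {c d : ℕ} (hcd : c ≤ d)
    (hg : gap X ≤ d - c + 1) :
    X + Icc c d = Icc (mn X + c) (mx X + d) := by
  ext n
  rw [Finset.mem_add, Finset.mem_Icc]
  constructor
  · rintro ⟨x, hx, y, hy, rfl⟩
    rw [Finset.mem_Icc] at hy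
    have := mn_le hx; have := le_mx hx
    omega
  · rintro ⟨hn1, hn2⟩
    by_cases hbc : mx X + c ≤ n
    · exact ⟨mx X, mx_mem hX, n - mx X, Finset.mem_Icc.mpr (by omega), by omega⟩
    · have h1 : mn X ≤ n - c := by omega
      have h2 : n - c < mx X := by omega
      obtain ⟨x, hx, hx1, hx2⟩ := cover hX hg h1 h2
      refine ⟨x, hx, n - x, Finset.mem_Icc.mpr (by omega), by omega⟩

lemma gap_le_of_add_Icc {X : Finset ℕ} {c d : ℕ} (hcd : c ≤ d)
    (h : X + Icc c d = Icc (mn X + c) (mx X + d)) : gap X ≤ d - c + 1 := by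
  rw [gap_le_iff]
  intro x x' ⟨hx, hx', hlt, hmid⟩
  by_contra hbig
  push_neg at hbig
  have hn : x + d + 1 ∈ Icc (mn X + c) (mx X + d) := by
    rw [Finset.mem_Icc]
    have := mn_le hx; have := le_mx hx'
    omega
  rw [← h, Finset.mem_add] at hn
  obtain ⟨z, hz, y, hy, hzy⟩ := hn
  rw [Finset.mem_Icc] at hy
  exact hmid z hz (by omega)

lemma gap_singleton (a : ℕ) : gap {a} = 0 := by
  rw [gap]
  apply Nat.le_zero.mp
  apply Finset.sup_le
  intro p hp
  have hc := consec_mem_filter.mp (by exact hp)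
  obtain ⟨h1, h2, h3, _⟩ := hc
  rw [Finset.mem_singleton] at h1 h2
  omega

lemma mem_singleton_add {s n : ℕ} {X : Finset ℕ} :
    n ∈ {s} + X ↔ ∃ x ∈ X, n = s + x := by
  rw [Finset.mem_add]
  constructor
  · rintro ⟨a, ha, y, hy, rfl⟩
    rw [Finset.mem_singleton] at ha; subst ha; exact ⟨y, hy, rfl⟩
  · rintro ⟨x, hx, rfl⟩
    exact ⟨s, by simp, x, hx, rfl⟩

lemma gap_singleton_add (s : ℕ) (X : Finset ℕ) : gap ({s} + X) = gap X := by
  apply le_antisymm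
  · rw [gap_le_iff]
    intro u v ⟨h1, h2, h3, h4⟩
    rw [mem_singleton_add] at h1 h2
    obtain ⟨x, hx, rfl⟩ := h1
    obtain ⟨x', hx', rfl⟩ := h2
    have hc : Consec X x x' := by
      refine ⟨hx, hx', by omega, ?_⟩
      intro y hy hy2
      exact h4 (s + y) (mem_singleton_add.mpr ⟨y, hy, rfl⟩) (by omega)
    have := le_gap hc; omega
  · rw [gap_le_iff]
    intro x x' ⟨h1, h2, h3, h4⟩
    have hc : Consec ({s} + X) (s + x) (s + x') := by
      refine ⟨mem_singleton_add.mpr ⟨x, h1, rfl⟩, mem_singleton_add.mpr ⟨x', h2, rfl⟩,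
        by omega, ?_⟩
      intro y hy hy2
      rw [mem_singleton_add] at hy
      obtain ⟨z, hz, rfl⟩ := hy
      exact h4 z hz (by omega)
    have := le_gap hc; omega

lemma gap_add_singleton (s : ℕ) (X : Finset ℕ) : gap (X + {s}) = gap X := by
  rw [add_comm]; exact gap_singleton_add s X



section Sgp
variable {S : Set ℕ} (hadd : ∀ a ∈ S, ∀ b ∈ S, a + b ∈ S) {k : ℕ} (hk : ∀ n, k ≤ n → n ∈ S)

lemma PS_nonempty {X : Finset ℕ} (hX : X ∈ PS S) : X.Nonempty := hX.1

lemma PS_mem_S {X : Finset ℕ} (hX : X ∈ PS S) {x : ℕ} (hx : x ∈ X) : x ∈ S :=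
  hX.2 hx

include hadd in
lemma PS_add {X Y : Finset ℕ} (hX : X ∈ PS S) (hY : Y ∈ PS S) : X + Y ∈ PS S := by
  refine ⟨hX.1.add hY.1, fun n hn => ?_⟩
  rw [Finset.mem_coe, Finset.mem_add] at hn
  obtain ⟨x, hx, y, hy, rfl⟩ := hn
  exact hadd x (hX.2 hx) y (hY.2 hy)

lemma PS_singleton {s : ℕ} (hs : s ∈ S) : ({s} : Finset ℕ) ∈ PS S :=
  ⟨Finset.singleton_nonempty s, by simpa using hs⟩

lemma PS_pair {a b : ℕ} (ha : a ∈ S) (hb : b ∈ S) : ({a, b} : Finset ℕ) ∈ PS S := by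
  refine ⟨pair_nonempty a b, fun x hx => ?_⟩
  rw [Finset.coe_insert, Set.mem_insert_iff] at hx
  rcases hx with rfl | hx
  · exact ha
  · rw [Finset.coe_singleton, Set.mem_singleton_iff] at hx; subst hx; exact hb

include hk in
lemma PS_Icc {a b : ℕ} (hka : k ≤ a) (hab : a ≤ b) : Icc a b ∈ PS S := by
  refine ⟨Finset.nonempty_Icc.mpr hab, fun x hx => ?_⟩
  rw [Finset.mem_coe, Finset.mem_Icc] at hx
  exact hk x (by omega)


include hk in
lemma not_cancel {X : Finset ℕ} (hX : X ∈ PS S) (hlt : mn X < mx X) :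
    ∃ Y Z : Finset ℕ, Y ∈ PS S ∧ Z ∈ PS S ∧ Y ≠ Z ∧ X + Y = X + Z := by
  set a := mn X
  set b := mx X
  set w := b - a with hw
  have hw1 : 1 ≤ w := by omega
  refine ⟨Icc k (k + 2*w + 2),
    Icc k (k + w) ∪ Icc (k + w + 2) (k + 2*w + 2),
    PS_Icc hk (le_refl k) (by omega), ?_, ?_, ?_⟩
  · constructor
    · exact ⟨k, Finset.mem_union_left _ (Finset.mem_Icc.mpr (by omega))⟩
    · intro x hx
      rw [Finset.mem_coe, Finset.mem_union, Finset.mem_Icc, Finset.mem_Icc] at hx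
      exact hk x (by omega)
  · intro h
    have : (k + w + 1) ∈ Icc k (k + 2*w + 2) := Finset.mem_Icc.mpr (by omega)
    rw [h, Finset.mem_union, Finset.mem_Icc, Finset.mem_Icc] at this
    omega
  · have hgw : gap X ≤ w := gap_le_width
    have e1 : X + Icc k (k + 2*w + 2) = Icc (a + k) (b + (k + 2*w + 2)) :=
      add_Icc_eq hX.1 (by omega) (by omega)
    have e2 : X + Icc k (k + w) = Icc (a + k) (b + (k + w)) :=
      add_Icc_eq hX.1 (by omega) (by omega)
    have e3 : X + Icc (k + w + 2) (k + 2*w + 2) =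
        Icc (a + (k + w + 2)) (b + (k + 2*w + 2)) :=
      add_Icc_eq hX.1 (by omega) (by omega)
    rw [e1, Finset.add_union, e2, e3]
    ext n
    rw [Finset.mem_Icc, Finset.mem_union, Finset.mem_Icc, Finset.mem_Icc]
    omega

end Sgp


section Aut
variable {S : Set ℕ} {k : ℕ} {f : Finset ℕ → Finset ℕ}
variable (hadd : ∀ a ∈ S, ∀ b ∈ S, a + b ∈ S) (hk : ∀ n, k ≤ n → n ∈ S)
variable (hf : IsPowerAut S f)

lemma singleton_cancel {t : ℕ} {A B : Finset ℕ} (h : {t} + A = {t} + B) : A = B := by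
  ext n
  constructor
  · intro hn
    have : t + n ∈ {t} + B := h ▸ (mem_singleton_add.mpr ⟨n, hn, rfl⟩)
    rw [mem_singleton_add] at this
    obtain ⟨x, hx, he⟩ := this
    have : n = x := by omega
    rw [this]; exact hx
  · intro hn
    have : t + n ∈ {t} + A := h.symm ▸ (mem_singleton_add.mpr ⟨n, hn, rfl⟩)
    rw [mem_singleton_add] at this
    obtain ⟨x, hx, he⟩ := this
    have : n = x := by omega
    rw [this]; exact hx

include hadd hk hf in
lemma f_singleton_exists {s : ℕ} (hs : s ∈ S) : ∃ t, f {s} = {t} := by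
  obtain ⟨hmap, hinj, hsurj, hmul⟩ := hf
  have hsPS : ({s} : Finset ℕ) ∈ PS S := PS_singleton hs
  have hU : f {s} ∈ PS S := hmap _ hsPS
  by_cases hcase : mn (f {s}) < mx (f {s})
  · exfalso
    obtain ⟨Y, Z, hY, hZ, hYZ, hE⟩ := not_cancel hk hU hcase
    obtain ⟨Y', hY', rfl⟩ := hsurj Y hY
    obtain ⟨Z', hZ', rfl⟩ := hsurj Z hZ
    rw [← hmul _ hsPS _ hY', ← hmul _ hsPS _ hZ'] at hE
    have := hinj _ (PS_add hadd hsPS hY') _ (PS_add hadd hsPS hZ') hE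
    exact hYZ (congrArg f (singleton_cancel this))
  · have : mn (f {s}) = mx (f {s}) := le_antisymm (mn_le_mx hU.1) (by omega)
    exact ⟨mn (f {s}), eq_singleton_of_mn_eq_mx hU.1 this⟩

include hadd hk hf in
lemma f_singleton_surj {t : ℕ} (ht : t ∈ S) : ∃ s ∈ S, f {s} = {t} := by
  obtain ⟨hmap, hinj, hsurj, hmul⟩ := hf
  obtain ⟨X, hX, hXe⟩ := hsurj {t} (PS_singleton ht)
  have hsng : mn X = mx X := by
    by_contra hne
    have hlt : mn X < mx X := lt_of_le_of_ne (mn_le_mx hX.1) hne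
    obtain ⟨Y, Z, hY, hZ, hYZ, hE⟩ := not_cancel hk hX hlt
    have : f (X + Y) = f (X + Z) := by rw [hE]
    rw [hmul _ hX _ hY, hmul _ hX _ hZ, hXe] at this
    exact hYZ (hinj _ hY _ hZ (singleton_cancel this))
  have hXs : X = {mn X} := eq_singleton_of_mn_eq_mx hX.1 hsng
  exact ⟨mn X, PS_mem_S hX (mn_mem hX.1), by rw [← hXs]; exact hXe⟩

include hadd hk hf in
lemma f_singleton_id {s : ℕ} (hs : s ∈ S) : f {s} = {s} := by
  classical
  -- the induced map on singletons
  set σ : ℕ → ℕ := fun s => mx (f {s}) with hσdef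
  have hσ : ∀ s ∈ S, f {s} = {σ s} := by
    intro s hs
    obtain ⟨t, ht⟩ := f_singleton_exists hadd hk hf hs
    rw [ht, hσdef]; simp [ht, mx_singleton]
  have hσS : ∀ s ∈ S, σ s ∈ S := by
    intro s hs
    have := (hf.1 _ (PS_singleton hs))
    rw [hσ s hs] at this
    exact PS_mem_S this (by simp)
  have hσadd : ∀ s ∈ S, ∀ t ∈ S, σ (s + t) = σ s + σ t := by
    intro s hs t ht
    have h1 : f ({s} + {t}) = f {s} + f {t} := hf.2.2.2 _ (PS_singleton hs) _ (PS_singleton ht)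
    rw [hσ s hs, hσ t ht] at h1
    have h2 : ({s} : Finset ℕ) + {t} = {s + t} := by
      ext n; rw [mem_singleton_add]; simp
    have h3 : ({σ s} : Finset ℕ) + {σ t} = {σ s + σ t} := by
      ext n; rw [mem_singleton_add]; simp
    rw [h2, h3, hσ (s+t) (hadd s hs t ht)] at h1
    exact Finset.singleton_injective h1
  have hσinj : ∀ s ∈ S, ∀ t ∈ S, σ s = σ t → s = t := by
    intro s hs t ht he
    have : f {s} = f {t} := by rw [hσ s hs, hσ t ht, he]
    have := hf.2.1 _ (PS_singleton hs) _ (PS_singleton ht) this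
    exact Finset.singleton_injective this
  have hσsurj : ∀ t ∈ S, ∃ s ∈ S, σ s = t := by
    intro t ht
    obtain ⟨s, hs, he⟩ := f_singleton_surj hadd hk hf ht
    refine ⟨s, hs, ?_⟩
    rw [hσ s hs] at he
    exact Finset.singleton_injective he
  -- multiples
  have hmulS : ∀ s ∈ S, ∀ n : ℕ, 1 ≤ n → (n * s ∈ S) := by
    intro s hs n hn
    induction n with
    | zero => omega
    | succ m ih =>
      by_cases hm : 1 ≤ m
      · have := hadd _ (ih hm) _ hs
        have he : m * s + s = (m+1) * s := by ring
        rwa [he] at this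
      · have : m = 0 := by omega
        subst this; simpa using hs
  have hσmul : ∀ s ∈ S, ∀ n : ℕ, 1 ≤ n → σ (n * s) = n * σ s := by
    intro s hs n hn
    induction n with
    | zero => omega
    | succ m ih =>
      by_cases hm : 1 ≤ m
      · have h1 : (m+1) * s = m * s + s := by ring
        rw [h1, hσadd _ (hmulS s hs m hm) _ hs, ih hm]; ring
      · have : m = 0 := by omega
        subst this; simp
  -- cross relation
  have hcross : ∀ s ∈ S, ∀ t ∈ S, 1 ≤ s → 1 ≤ t → s * σ t = t * σ s := by
    intro s hs t ht h1 h2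
    have e1 : σ (s * t) = s * σ t := hσmul t ht s h1
    have e2 : σ (t * s) = t * σ s := hσmul s hs t h2
    rw [mul_comm t s] at e2
    omega
  -- zero
  have hσ0 : 0 ∈ S → σ 0 = 0 := by
    intro h0
    have := hσadd 0 h0 0 h0
    simp at this
    omega
  -- least positive element
  have hSpos : ∃ n, n ∈ S ∧ 1 ≤ n := ⟨k + 1, hk (k+1) (by omega), by omega⟩
  set m := sInf {n | n ∈ S ∧ 1 ≤ n} with hm
  have hmmem : m ∈ S ∧ 1 ≤ m := Nat.sInf_mem hSpos
  have hmle : ∀ n, n ∈ S → 1 ≤ n → m ≤ n := fun n h1 h2 => Nat.sInf_le ⟨h1, h2⟩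
  -- σ m = m
  have hσm : σ m = m := by
    rcases lt_trichotomy (σ m) m with hc | hc | hc
    · -- σ m < m
      by_cases h0 : σ m = 0
      · exfalso
        have hz : ∀ t ∈ S, 1 ≤ t → σ t = 0 := by
          intro t ht h1
          have := hcross m hmmem.1 t ht hmmem.2 h1
          rw [h0] at this
          simp at this
          omega
        have e1 := hz (k+1) (hk _ (by omega)) (by omega)
        have e2 := hz (k+2) (hk _ (by omega)) (by omega)
        have := hσinj (k+1) (hk _ (by omega)) (k+2) (hk _ (by omega)) (by omega)
        omega
      · exfalso
        have := hmle (σ m) (hσS m hmmem.1) (by omega)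
        omega
    · exact hc
    · exfalso
      obtain ⟨x, hx, hxe⟩ := hσsurj m hmmem.1
      have hx1 : 1 ≤ x := by
        by_contra h
        have : x = 0 := by omega
        subst this
        have := hσ0 hx
        omega
      have hxm : m ≤ x := hmle x hx hx1
      have := hcross x hx m hmmem.1 hx1 hmmem.2
      rw [hxe] at this
      nlinarith
  -- conclude σ s = s for all s in S
  have hσid : ∀ s ∈ S, σ s = s := by
    intro s hs
    by_cases h1 : 1 ≤ s
    · have := hcross s hs m hmmem.1 h1 hmmem.2
      rw [hσm] at this
      have hm1 : 1 ≤ m := hmmem.2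
      nlinarith
    · have : s = 0 := by omega
      subst this
      exact hσ0 hs
  rw [hσ s hs, hσid s hs]


include hadd hk hf in
lemma minmax_shift {X X' : Finset ℕ} (hX : X ∈ PS S) (hX' : X' ∈ PS S)
    (hww : mx X + mn X' = mn X + mx X') :
    mn (f X) + mn X' = mn (f X') + mn X ∧ mx (f X) + mx X' = mx (f X') + mx X := by
  have hkS : k ∈ S := hk k (le_refl k)
  have haS : mn X ∈ S := PS_mem_S hX (mn_mem hX.1)
  have ha'S : mn X' ∈ S := PS_mem_S hX' (mn_mem hX'.1)
  set c₁ := mn X' + k with hc₁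
  set c₂ := mn X + k with hc₂
  have hc₁S : c₁ ∈ S := hadd _ ha'S _ hkS
  have hc₂S : c₂ ∈ S := hadd _ haS _ hkS
  set X₁ := X + {c₁} with hX₁def
  set X₂ := X' + {c₂} with hX₂def
  have hX₁ : X₁ ∈ PS S := PS_add hadd hX (PS_singleton hc₁S)
  have hX₂ : X₂ ∈ PS S := PS_add hadd hX' (PS_singleton hc₂S)
  have hab := mn_le_mx hX.1
  have hab' := mn_le_mx hX'.1
  have hmn₁ : mn X₁ = mn X + c₁ := by
    rw [hX₁def, mn_add hX.1 (Finset.singleton_nonempty _), mn_singleton]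
  have hmx₁ : mx X₁ = mx X + c₁ := by
    rw [hX₁def, mx_add hX.1 (Finset.singleton_nonempty _), mx_singleton]
  have hmn₂ : mn X₂ = mn X' + c₂ := by
    rw [hX₂def, mn_add hX'.1 (Finset.singleton_nonempty _), mn_singleton]
  have hmx₂ : mx X₂ = mx X' + c₂ := by
    rw [hX₂def, mx_add hX'.1 (Finset.singleton_nonempty _), mx_singleton]
  set A := mn X + mn X' + k with hA
  set B := mx X + mn X' + k with hB
  have hmn₁' : mn X₁ = A := by omega
  have hmx₁' : mx X₁ = B := by omega
  have hmn₂' : mn X₂ = A := by omega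
  have hmx₂' : mx X₂ = B := by omega
  have hAB : A ≤ B := by omega
  set I := Icc k (k + (B - A)) with hI
  have hIPS : I ∈ PS S := PS_Icc hk (le_refl k) (by omega)
  have hg₁ : gap X₁ ≤ (k + (B - A)) - k + 1 := by
    have := gap_le_width (X := X₁); omega
  have hg₂ : gap X₂ ≤ (k + (B - A)) - k + 1 := by
    have := gap_le_width (X := X₂); omega
  have e1 : X₁ + I = Icc (A + k) (B + (k + (B - A))) := by
    rw [hI, add_Icc_eq hX₁.1 (by omega) hg₁, hmn₁', hmx₁']
  have e2 : X₂ + I = Icc (A + k) (B + (k + (B - A))) := by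
    rw [hI, add_Icc_eq hX₂.1 (by omega) hg₂, hmn₂', hmx₂']
  have hE : f X₁ + f I = f X₂ + f I := by
    rw [← hf.2.2.2 _ hX₁ _ hIPS, ← hf.2.2.2 _ hX₂ _ hIPS, e1, e2]
  have hfX₁ : f X₁ ∈ PS S := hf.1 _ hX₁
  have hfX₂ : f X₂ ∈ PS S := hf.1 _ hX₂
  have hfI : f I ∈ PS S := hf.1 _ hIPS
  have hEmn : mn (f X₁) = mn (f X₂) := by
    have := congrArg mn hE
    rw [mn_add hfX₁.1 hfI.1, mn_add hfX₂.1 hfI.1] at this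
    omega
  have hEmx : mx (f X₁) = mx (f X₂) := by
    have := congrArg mx hE
    rw [mx_add hfX₁.1 hfI.1, mx_add hfX₂.1 hfI.1] at this
    omega
  have hfs₁ : f X₁ = f X + {c₁} := by
    rw [hX₁def, hf.2.2.2 _ hX _ (PS_singleton hc₁S), f_singleton_id hadd hk hf hc₁S]
  have hfs₂ : f X₂ = f X' + {c₂} := by
    rw [hX₂def, hf.2.2.2 _ hX' _ (PS_singleton hc₂S), f_singleton_id hadd hk hf hc₂S]
  have hfX : f X ∈ PS S := hf.1 _ hX
  have hfX' : f X' ∈ PS S := hf.1 _ hX'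
  have q1 : mn (f X₁) = mn (f X) + c₁ := by
    rw [hfs₁, mn_add hfX.1 (Finset.singleton_nonempty _), mn_singleton]
  have q2 : mn (f X₂) = mn (f X') + c₂ := by
    rw [hfs₂, mn_add hfX'.1 (Finset.singleton_nonempty _), mn_singleton]
  have q3 : mx (f X₁) = mx (f X) + c₁ := by
    rw [hfs₁, mx_add hfX.1 (Finset.singleton_nonempty _), mx_singleton]
  have q4 : mx (f X₂) = mx (f X') + c₂ := by
    rw [hfs₂, mx_add hfX'.1 (Finset.singleton_nonempty _), mx_singleton]
  omega

include hadd hk hf in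
lemma f_mn_mx : ∀ X ∈ PS S, mn (f X) = mn X ∧ mx (f X) = mx X := by
  classical
  have hkS : k ∈ S := hk k (le_refl k)
  have hpairPS : ∀ w : ℕ, ({k, k + w} : Finset ℕ) ∈ PS S :=
    fun w => PS_pair hkS (hk _ (by omega))
  obtain ⟨δ, hδ⟩ : ∃ g : ℕ → ℤ, ∀ w, g w = (mn (f {k, k + w}) : ℤ) - k :=
    ⟨_, fun w => rfl⟩
  obtain ⟨ε, hε⟩ : ∃ g : ℕ → ℤ, ∀ w, g w = (mx (f {k, k + w}) : ℤ) - (k + w) :=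
    ⟨_, fun w => rfl⟩
  have key : ∀ X ∈ PS S, (mn (f X) : ℤ) = mn X + δ (mx X - mn X) ∧
      (mx (f X) : ℤ) = mx X + ε (mx X - mn X) := by
    intro X hX
    have hab := mn_le_mx hX.1
    have hww : mx X + mn ({k, k + (mx X - mn X)} : Finset ℕ)
        = mn X + mx ({k, k + (mx X - mn X)} : Finset ℕ) := by
      rw [mn_pair (by omega), mx_pair (by omega)]; omega
    obtain ⟨h1, h2⟩ := minmax_shift hadd hk hf hX (hpairPS (mx X - mn X)) hww
    rw [mn_pair (by omega)] at h1
    rw [mx_pair (by omega)] at h2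
    rw [hδ, hε]
    constructor
    · push_cast; omega
    · push_cast; omega
  -- additivity
  have haddδε : ∀ w w', δ (w + w') = δ w + δ w' ∧ ε (w + w') = ε w + ε w' := by
    intro w w'
    have hPPS : ({k, k + w} : Finset ℕ) + {k, k + w'} ∈ PS S :=
      PS_add hadd (hpairPS w) (hpairPS w')
    have hPmn : mn (({k, k + w} : Finset ℕ) + {k, k + w'}) = 2 * k := by
      rw [mn_add (hpairPS w).1 (hpairPS w').1, mn_pair (by omega), mn_pair (by omega)]
      ring
    have hPmx : mx (({k, k + w} : Finset ℕ) + {k, k + w'}) = 2 * k + w + w' := by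
      rw [mx_add (hpairPS w).1 (hpairPS w').1, mx_pair (by omega), mx_pair (by omega)]
      ring
    have hfP : f (({k, k + w} : Finset ℕ) + {k, k + w'}) = f {k, k + w} + f {k, k + w'} :=
      hf.2.2.2 _ (hpairPS w) _ (hpairPS w')
    have hfp1 : f {k, k + w} ∈ PS S := hf.1 _ (hpairPS w)
    have hfp2 : f {k, k + w'} ∈ PS S := hf.1 _ (hpairPS w')
    have hfPmn : (mn (f (({k, k + w} : Finset ℕ) + {k, k + w'})) : ℤ)
        = (mn (f {k, k + w}) : ℤ) + (mn (f {k, k + w'}) : ℤ) := by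
      rw [hfP, mn_add hfp1.1 hfp2.1]; push_cast; ring
    have hfPmx : (mx (f (({k, k + w} : Finset ℕ) + {k, k + w'})) : ℤ)
        = (mx (f {k, k + w}) : ℤ) + (mx (f {k, k + w'}) : ℤ) := by
      rw [hfP, mx_add hfp1.1 hfp2.1]; push_cast; ring
    obtain ⟨k1, k2⟩ := key _ hPPS
    rw [hPmn, hPmx] at k1 k2
    have hsub : 2 * k + w + w' - 2 * k = w + w' := by omega
    rw [hsub] at k1 k2
    push_cast at k1 k2
    have e1 : (mn (f {k, k + w}) : ℤ) = k + δ w := by rw [hδ]; ring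
    have e2 : (mn (f {k, k + w'}) : ℤ) = k + δ w' := by rw [hδ]; ring
    have e3 : (mx (f {k, k + w}) : ℤ) = k + w + ε w := by rw [hε]; ring
    have e4 : (mx (f {k, k + w'}) : ℤ) = k + w' + ε w' := by rw [hε]; ring
    constructor
    · linarith [k1, hfPmn, e1, e2]
    · linarith [k2, hfPmx, e3, e4]
  have hδ0 : δ 0 = 0 := by
    have hp0 : ({k, k + 0} : Finset ℕ) = {k} := by norm_num
    rw [hδ, hp0, f_singleton_id hadd hk hf hkS, mn_singleton]; ring
  have hε0 : ε 0 = 0 := by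
    have hp0 : ({k, k + 0} : Finset ℕ) = {k} := by norm_num
    rw [hε, hp0, f_singleton_id hadd hk hf hkS, mx_singleton]; push_cast; ring
  have hδlin : ∀ w : ℕ, δ w = w * δ 1 := by
    intro w
    induction w with
    | zero => rw [hδ0]; simp
    | succ n ih =>
      have := (haddδε n 1).1
      rw [this, ih]; push_cast; ring
  have hεlin : ∀ w : ℕ, ε w = w * ε 1 := by
    intro w
    induction w with
    | zero => rw [hε0]; simp
    | succ n ih =>
      have := (haddδε n 1).2
      rw [this, ih]; push_cast; ring
  -- pin ε 1 = δ 1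
  have hεδ : ε 1 = δ 1 := by
    have hT : ({k, k + 1} : Finset ℕ) ∈ PS S := hpairPS 1
    obtain ⟨X', hX', hXe⟩ := hf.2.2.1 _ hT
    obtain ⟨k1, k2⟩ := key X' hX'
    rw [hXe] at k1 k2
    rw [mn_pair (by omega)] at k1
    rw [mx_pair (by omega)] at k2
    have hab := mn_le_mx hX'.1
    rw [hδlin] at k1
    rw [hεlin] at k2
    have hcast : ((mx X' - mn X' : ℕ) : ℤ) = (mx X' : ℤ) - mn X' := by push_cast; omega
    rw [hcast] at k1 k2
    push_cast at k1 k2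
    have hmain : ((mx X' : ℤ) - mn X') * (1 + ε 1 - δ 1) = 1 := by
      linear_combination k1 - k2
    have hw'1 : ((mx X' : ℤ) - mn X') = 1 := by
      have hu : IsUnit ((mx X' : ℤ) - mn X') := IsUnit.of_mul_eq_one _ hmain
      rcases Int.isUnit_iff.mp hu with h | h
      · exact h
      · exfalso
        have : (0 : ℤ) ≤ (mx X' : ℤ) - mn X' := by push_cast; omega
        omega
    rw [hw'1] at hmain
    linarith
  obtain ⟨c, hcdef⟩ : ∃ c, c = δ 1 := ⟨_, rfl⟩
  have master : ∀ X ∈ PS S, (mn (f X) : ℤ) = mn X + ((mx X : ℤ) - mn X) * c ∧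
      (mx (f X) : ℤ) = mx X + ((mx X : ℤ) - mn X) * c := by
    intro X hX
    have hab := mn_le_mx hX.1
    obtain ⟨k1, k2⟩ := key X hX
    have hcast : ((mx X - mn X : ℕ) : ℤ) = (mx X : ℤ) - mn X := by push_cast; omega
    rw [hδlin, hcast, ← hcdef] at k1
    rw [hεlin, hεδ, hcast, ← hcdef] at k2
    exact ⟨k1, k2⟩
  -- pin c = 0
  have hc0 : c = 0 := by
    have hSne : ∃ n, n ∈ {a | a ∈ S ∧ a + 1 ∈ S} := ⟨k, hk k (le_refl k), hk (k+1) (by omega)⟩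
    have ha₀mem : sInf {a | a ∈ S ∧ a + 1 ∈ S} ∈ {a | a ∈ S ∧ a + 1 ∈ S} := Nat.sInf_mem hSne
    set a₀ := sInf {a | a ∈ S ∧ a + 1 ∈ S} with ha₀
    have ha₀le : ∀ n, n ∈ S → n + 1 ∈ S → a₀ ≤ n := fun n h1 h2 => Nat.sInf_le ⟨h1, h2⟩
    have hT₀ : ({a₀, a₀ + 1} : Finset ℕ) ∈ PS S := PS_pair ha₀mem.1 ha₀mem.2
    rcases lt_trichotomy c 0 with hlt | he | hgt
    · exfalso
      obtain ⟨k1, k2⟩ := master _ hT₀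
      rw [mn_pair (by omega), mx_pair (by omega)] at k1 k2
      have k1' : (mn (f {a₀, a₀ + 1}) : ℤ) = a₀ + c := by rw [k1]; push_cast; ring
      have k2' : (mx (f {a₀, a₀ + 1}) : ℤ) = a₀ + 1 + c := by rw [k2]; push_cast; ring
      have hfT : f {a₀, a₀ + 1} ∈ PS S := hf.1 _ hT₀
      have hw : mx (f {a₀, a₀ + 1}) = mn (f {a₀, a₀ + 1}) + 1 := by omega
      have h1 : mn (f {a₀, a₀ + 1}) ∈ S := PS_mem_S hfT (mn_mem hfT.1)
      have h2 : mn (f {a₀, a₀ + 1}) + 1 ∈ S := by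
        rw [← hw]; exact PS_mem_S hfT (mx_mem hfT.1)
      have := ha₀le _ h1 h2
      omega
    · exact he
    · exfalso
      obtain ⟨X', hX', hXe⟩ := hf.2.2.1 _ hT₀
      obtain ⟨k1, k2⟩ := master X' hX'
      rw [hXe] at k1 k2
      rw [mn_pair (by omega)] at k1
      rw [mx_pair (by omega)] at k2
      push_cast at k1 k2
      have hab := mn_le_mx hX'.1
      have hwid : ((mx X' : ℤ) - mn X') = 1 := by linarith [k1, k2]
      rw [hwid] at k1
      have k1' : (a₀ : ℤ) = mn X' + c := by rw [k1]; ring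
      have h1 : mn X' ∈ S := PS_mem_S hX' (mn_mem hX'.1)
      have hwn : mx X' = mn X' + 1 := by omega
      have h2 : mn X' + 1 ∈ S := by rw [← hwn]; exact PS_mem_S hX' (mx_mem hX'.1)
      have := ha₀le _ h1 h2
      omega
  intro X hX
  have hab := mn_le_mx hX.1
  obtain ⟨k1, k2⟩ := master X hX
  rw [hc0] at k1 k2
  push_cast at k1 k2
  constructor <;> omega


include hadd hk hf in
lemma f_Icc {a b : ℕ} (hka : k ≤ a) (hab : a ≤ b) : f (Icc a b) = Icc a b := by
  by_cases heq : a = b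
  · subst heq
    rw [Finset.Icc_self]
    exact f_singleton_id hadd hk hf (hk a hka)
  have hIPS : Icc a b ∈ PS S := PS_Icc hk hka hab
  have hU : f (Icc a b) ∈ PS S := hf.1 _ hIPS
  obtain ⟨hmnU, hmxU⟩ := f_mn_mx hadd hk hf _ hIPS
  rw [mn_Icc hab] at hmnU
  rw [mx_Icc hab] at hmxU
  obtain ⟨Z₃, hZ₃, hZ₃e⟩ := hf.2.2.1 _ hIPS
  obtain ⟨hmn3, hmx3⟩ := f_mn_mx hadd hk hf _ hZ₃
  rw [hZ₃e, mn_Icc hab] at hmn3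
  rw [hZ₃e, mx_Icc hab] at hmx3
  have hg3 : gap Z₃ ≤ b - a + 1 := by
    have := gap_le_width (X := Z₃); omega
  have e3 : Z₃ + Icc a b = Icc (a + a) (b + b) := by
    rw [add_Icc_eq hZ₃.1 hab (by omega), hmn3, hmx3]
  have egU : gap (f (Icc a b)) ≤ b - a + 1 := by
    have := gap_le_width (X := f (Icc a b)); omega
  have eU : f (Icc a b) + Icc a b = Icc (a + a) (b + b) := by
    rw [add_Icc_eq hU.1 hab (by omega), hmnU, hmxU]
  have hdbl : f (Icc (a + a) (b + b)) = Icc (a + a) (b + b) := by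
    calc f (Icc (a+a) (b+b)) = f (Z₃ + Icc a b) := by rw [e3]
      _ = f Z₃ + f (Icc a b) := hf.2.2.2 _ hZ₃ _ hIPS
      _ = Icc a b + f (Icc a b) := by rw [hZ₃e]
      _ = f (Icc a b) + Icc a b := add_comm _ _
      _ = Icc (a+a) (b+b) := eU
  have hpab : ({a, b} : Finset ℕ) ∈ PS S := PS_pair (hk a hka) (hk b (le_trans hka hab))
  obtain ⟨Z₁, hZ₁, hZ₁e⟩ := hf.2.2.1 _ hpab
  obtain ⟨hmn1, hmx1⟩ := f_mn_mx hadd hk hf _ hZ₁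
  rw [hZ₁e, mn_pair hab] at hmn1
  rw [hZ₁e, mx_pair hab] at hmx1
  have hg1 : gap Z₁ ≤ b - a + 1 := by
    have := gap_le_width (X := Z₁); omega
  have e1 : Z₁ + Icc a b = Icc (a + a) (b + b) := by
    rw [add_Icc_eq hZ₁.1 hab (by omega), hmn1, hmx1]
  have epair : ({a, b} : Finset ℕ) + f (Icc a b) = Icc (a + a) (b + b) := by
    calc ({a,b} : Finset ℕ) + f (Icc a b) = f Z₁ + f (Icc a b) := by rw [hZ₁e]
      _ = f (Z₁ + Icc a b) := (hf.2.2.2 _ hZ₁ _ hIPS).symm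
      _ = f (Icc (a+a) (b+b)) := by rw [e1]
      _ = Icc (a+a) (b+b) := hdbl
  ext n
  rw [Finset.mem_Icc]
  constructor
  · intro hn
    have h1 := mn_le hn
    have h2 := le_mx hn
    omega
  · rintro ⟨h1, h2⟩
    by_cases hnb : n = b
    · subst hnb
      have := mx_mem hU.1
      rwa [hmxU] at this
    · have hmem : n + a ∈ Icc (a + a) (b + b) := Finset.mem_Icc.mpr (by omega)
      rw [← epair, Finset.mem_add] at hmem
      obtain ⟨u, hu, v, hv, huv⟩ := hmem
      rw [Finset.mem_insert, Finset.mem_singleton] at hu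
      have hva : a ≤ v := by
        have := mn_le hv; omega
      rcases hu with rfl | rfl
      · have hvn : v = n := by omega
        rwa [← hvn]
      · exfalso; omega

include hadd hk hf in
lemma gap_high {X : Finset ℕ} (hX : X ∈ PS S) (hkX : k ≤ mn X) : gap (f X) = gap X := by
  obtain ⟨hmn, hmx⟩ := f_mn_mx hadd hk hf _ hX
  have hU : f X ∈ PS S := hf.1 _ hX
  by_cases hsing : mn X = mx X
  · have h1 : X = {mn X} := eq_singleton_of_mn_eq_mx hX.1 hsing
    have h2 : f X = {mn (f X)} := eq_singleton_of_mn_eq_mx hU.1 (by omega)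
    rw [h2, gap_singleton, h1, gap_singleton]
  · have hlt : mn X < mx X := lt_of_le_of_ne (mn_le_mx hX.1) hsing
    have hltU : mn (f X) < mx (f X) := by omega
    have hL := one_le_gap hX.1 hlt
    have hL' := one_le_gap hU.1 hltU
    apply le_antisymm
    · -- gap (f X) ≤ gap X
      have hJ : Icc k (k + (gap X - 1)) ∈ PS S := PS_Icc hk (le_refl k) (by omega)
      have hXJ : X + Icc k (k + (gap X - 1))
          = Icc (mn X + k) (mx X + (k + (gap X - 1))) :=
        add_Icc_eq hX.1 (by omega) (by omega)
      have hfI1 : f (Icc (mn X + k) (mx X + (k + (gap X - 1))))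
          = Icc (mn X + k) (mx X + (k + (gap X - 1))) :=
        f_Icc hadd hk hf (by omega) (by omega)
      have hfJ : f (Icc k (k + (gap X - 1))) = Icc k (k + (gap X - 1)) :=
        f_Icc hadd hk hf (le_refl k) (by omega)
      have hkey : f X + Icc k (k + (gap X - 1))
          = Icc (mn (f X) + k) (mx (f X) + (k + (gap X - 1))) := by
        rw [← hfJ, ← hf.2.2.2 _ hX _ hJ, hXJ, hfI1, hmn, hmx]
      have := gap_le_of_add_Icc (X := f X) (by omega : k ≤ k + (gap X - 1)) hkey
      omega
    · -- gap X ≤ gap (f X)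
      have hJ : Icc k (k + (gap (f X) - 1)) ∈ PS S := PS_Icc hk (le_refl k) (by omega)
      have hfXJ : f X + Icc k (k + (gap (f X) - 1))
          = Icc (mn (f X) + k) (mx (f X) + (k + (gap (f X) - 1))) :=
        add_Icc_eq hU.1 (by omega) (by omega)
      have hI'PS : Icc (mn X + k) (mx X + (k + (gap (f X) - 1))) ∈ PS S :=
        PS_Icc hk (by omega) (by omega)
      have hfI' : f (Icc (mn X + k) (mx X + (k + (gap (f X) - 1))))
          = Icc (mn X + k) (mx X + (k + (gap (f X) - 1))) :=
        f_Icc hadd hk hf (by omega) (by omega)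
      have hfJ : f (Icc k (k + (gap (f X) - 1))) = Icc k (k + (gap (f X) - 1)) :=
        f_Icc hadd hk hf (le_refl k) (by omega)
      have hXJPS : X + Icc k (k + (gap (f X) - 1)) ∈ PS S := PS_add hadd hX hJ
      have hfeq : f (X + Icc k (k + (gap (f X) - 1)))
          = f (Icc (mn X + k) (mx X + (k + (gap (f X) - 1)))) := by
        rw [hf.2.2.2 _ hX _ hJ, hfJ, hfXJ, hfI', hmn, hmx]
      have hXJ : X + Icc k (k + (gap (f X) - 1))
          = Icc (mn X + k) (mx X + (k + (gap (f X) - 1))) :=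
        hf.2.1 _ hXJPS _ hI'PS hfeq
      have := gap_le_of_add_Icc (X := X) (by omega : k ≤ k + (gap (f X) - 1)) hXJ
      omega

end Aut
end S5

theorem stmt5_aux (S : Set ℕ) (hS : IsNumSgp S) (f : Finset ℕ → Finset ℕ)
    (hf : IsPowerAut S f) :
    ∀ X : Finset ℕ, X.Nonempty → (X : Set ℕ) ⊆ S → gap (f X) = gap X := by
  obtain ⟨hadd, hfin⟩ := hS
  have hex : ∃ k : ℕ, ∀ n, k ≤ n → n ∈ S := by
    obtain ⟨m, hm⟩ := hfin.bddAbove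
    refine ⟨m + 1, fun n hn => ?_⟩
    by_contra h
    have := hm (Set.mem_compl h)
    omega
  obtain ⟨k, hk⟩ := hex
  intro X hXne hXsub
  have hX : X ∈ PS S := ⟨hXne, hXsub⟩
  have hkS : k ∈ S := hk k (le_refl k)
  have h1 : X + {k} ∈ PS S := S5.PS_add hadd hX (S5.PS_singleton hkS)
  have hkmn : k ≤ S5.mn (X + {k}) := by
    rw [S5.mn_add hXne (Finset.singleton_nonempty _), S5.mn_singleton]
    omega
  have e : f (X + {k}) = f X + {k} := by
    rw [hf.2.2.2 _ hX _ (S5.PS_singleton hkS), S5.f_singleton_id hadd hk hf hkS]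
  calc gap (f X) = gap (f X + {k}) := (S5.gap_add_singleton k (f X)).symm
    _ = gap (f (X + {k})) := by rw [e]
    _ = gap (X + {k}) := S5.gap_high hadd hk hf h1 hkmn
    _ = gap X := S5.gap_add_singleton k X


/-- An automorphism of `P(S)` preserves the gap of every set. -/
theorem stmt5 (S : Set ℕ) (hS : IsNumSgp S) (f : Finset ℕ → Finset ℕ)
    (hf : IsPowerAut S f) :
    ∀ X : Finset ℕ, X.Nonempty → (X : Set ℕ) ⊆ S → gap (f X) = gap X :=
  stmt5_aux S hS f hf
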